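/- Let 1 ≤ r, s < ∞ and let s' = s/(s−1) be the conjugate exponent of s (s' = ∞ if s = 1). There exist ρ ∈ (0,1) and C > 0, depending only on r and s, such that: if N ≥ 1 and K : ℤ → ℂ is supported in [−N, N], and A is a constant with ‖K * f‖_{ℓ^{s'}} ≤ A ‖f‖_{ℓ^r} for all finitely supported f, then for all finitely supported f, g : ℤ → ℂ there is a ρ-sparse collection 𝒮 with |⟨K * f, g⟩| ≤ C · N^{1/r + 1/s − 1} · A · Λ_{𝒮,r,s}(f,g). -/

import Mathlib

noncomputable section

/-- `e(t) = exp(2πi t)`. -/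
def e (t : ℝ) : ℂ := Complex.exp (2 * Real.pi * Complex.I * t)

/-- A discrete interval is a set of the form `ℤ ∩ [a,b]`. -/
def IsDiscreteInterval (S : Finset ℤ) : Prop := ∃ a b : ℤ, a ≤ b ∧ S = Finset.Icc a b

/-- The `L^r` average of `f` over a discrete interval `S`. -/
def avg (r : ℝ) (f : ℤ → ℂ) (S : Finset ℤ) : ℝ :=
  ((S.card : ℝ)⁻¹ * ∑ x ∈ S, ‖f x‖ ^ r) ^ (1 / r)

/-- The collection `𝒮`, with distinguished subsets `E S ⊆ S`, is `ρ`-sparse. -/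
def IsSparse (ρ : ℝ) (𝒮 : Finset (Finset ℤ)) (E : Finset ℤ → Finset ℤ) : Prop :=
  (∀ S ∈ 𝒮, IsDiscreteInterval S) ∧
  (∀ S ∈ 𝒮, E S ⊆ S ∧ ρ * (S.card : ℝ) < ((E S).card : ℝ)) ∧
  (∀ x : ℤ, ((𝒮.filter (fun S => x ∈ E S)).card : ℝ) ≤ ρ⁻¹)

/-- The sparse bilinear form `Λ_{𝒮,r,s}(f,g)`. -/
def sparseForm (r s : ℝ) (𝒮 : Finset (Finset ℤ)) (f g : ℤ → ℂ) : ℝ :=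
  ∑ S ∈ 𝒮, avg r f S * avg s g S * (S.card : ℝ)

/-- The pairing `⟨F, g⟩ = ∑ₙ F(n) conj(g(n))`. -/
def pairing (F g : ℤ → ℂ) : ℂ := ∑' n : ℤ, F n * (starRingEnd ℂ) (g n)

/-- Convolution of a kernel with a finitely supported function on `ℤ`. -/
def conv (K f : ℤ → ℂ) (x : ℤ) : ℂ := ∑' n : ℤ, K n * f (x - n)

/-- The `ℓ^p` norm of a function on `ℤ` (for finite `p`). -/
def lpNorm (p : ℝ) (F : ℤ → ℂ) : ℝ := (∑' x : ℤ, ‖F x‖ ^ p) ^ (1 / p)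
/-- Auxiliary: `lpNorm` as a finite sum when the function is finitely supported. -/
lemma lpNorm_eq_finsum {p : ℝ} (hp : 0 < p) {F : ℤ → ℂ} {T : Finset ℤ}
    (hF : ∀ n ∉ T, F n = 0) :
    lpNorm p F = (∑ x ∈ T, ‖F x‖ ^ p) ^ (1 / p) := by
  unfold lpNorm
  rw [tsum_eq_sum (s := T) (fun b hb => by rw [hF b hb]; simp [Real.zero_rpow hp.ne'])]

lemma sum_rpow_le_lpNorm_rpow {p : ℝ} (hp : 0 < p) {F : ℤ → ℂ} {T : Finset ℤ}
    (hF : ∀ n ∉ T, F n = 0) (I : Finset ℤ) :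
    (∑ x ∈ I, ‖F x‖ ^ p) ^ (1 / p) ≤ lpNorm p F := by
  rw [lpNorm_eq_finsum hp hF]
  apply Real.rpow_le_rpow (by positivity) ?_ (by positivity)
  calc ∑ x ∈ I, ‖F x‖ ^ p ≤ ∑ x ∈ I ∪ T, ‖F x‖ ^ p := by
        apply Finset.sum_le_sum_of_subset_of_nonneg Finset.subset_union_left
        intro i _ _; positivity
    _ = ∑ x ∈ T, ‖F x‖ ^ p := by
        symm; apply Finset.sum_subset Finset.subset_union_right
        intro x _ hx; rw [hF x hx]; simp [Real.zero_rpow hp.ne']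

lemma sum_rpow_eq_avg_mul {p : ℝ} (f : ℤ → ℂ) (S : Finset ℤ) (hS : 0 < S.card) :
    (∑ x ∈ S, ‖f x‖ ^ p) ^ (1 / p) = avg p f S * (S.card : ℝ) ^ (1 / p) := by
  unfold avg
  rw [← Real.mul_rpow (by positivity) (by positivity)]
  congr 1
  have : (S.card : ℝ) ≠ 0 := by positivity
  field_simp

set_option maxHeartbeats 1000000 in
theorem sparse_bound_from_operator_norm (r s : ℝ) (hr : 1 ≤ r) (hs : 1 ≤ s) :
    ∃ ρ : ℝ, 0 < ρ ∧ ρ < 1 ∧ ∃ C : ℝ, 0 < C ∧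
      ∀ N : ℝ, 1 ≤ N → ∀ K : ℤ → ℂ, (∀ n : ℤ, K n ≠ 0 → (|n| : ℝ) ≤ N) →
        ∀ A : ℝ,
          (s = 1 → ∀ f : ℤ → ℂ, (Function.support f).Finite →
              ∀ x : ℤ, ‖conv K f x‖ ≤ A * lpNorm r f) →
          (s ≠ 1 → ∀ f : ℤ → ℂ, (Function.support f).Finite →
              lpNorm (s / (s - 1)) (conv K f) ≤ A * lpNorm r f) →
          ∀ f g : ℤ → ℂ, (Function.support f).Finite → (Function.support g).Finite →
            ∃ (𝒮 : Finset (Finset ℤ)) (E : Finset ℤ → Finset ℤ), IsSparse ρ 𝒮 E ∧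
              ‖pairing (conv K f) g‖ ≤
                C * N ^ (1 / r + 1 / s - 1) * A * sparseForm r s 𝒮 f g := by
  classical
  have hr0 : 0 < r := lt_of_lt_of_le zero_lt_one hr
  have hs0 : 0 < s := lt_of_lt_of_le zero_lt_one hs
  refine ⟨1/4, by norm_num, by norm_num, 6, by norm_num, ?_⟩
  intro N hN K hKsupp A h1 h2 f g hf hg
  set ε : ℝ := 1 / r + 1 / s - 1 with hε
  set L : ℤ := ⌈N⌉ with hLdef
  have hN0 : (0:ℝ) < N := lt_of_lt_of_le zero_lt_one hN
  have hL1 : (1:ℤ) ≤ L := by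
    exact_mod_cast Int.one_le_ceil_iff.mpr (lt_of_lt_of_le zero_lt_one hN)
  have hL0 : (0:ℤ) < L := hL1
  have hLR : N ≤ (L:ℝ) := Int.le_ceil N
  have hLR0 : (0:ℝ) < (L:ℝ) := lt_of_lt_of_le hN0 hLR
  have hL2N : (L:ℝ) ≤ 2*N := by
    have h := Int.ceil_lt_add_one N
    have : (L:ℝ) < N + 1 := h
    linarith
  have hKS : ∀ n : ℤ, K n ≠ 0 → n ∈ Finset.Icc (-L) L := by
    intro n hn
    have h1' := hKsupp n hn
    have h2' : |n| ≤ L := by exact_mod_cast le_trans h1' hLR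
    obtain ⟨hx1, hx2⟩ := abs_le.mp h2'
    exact Finset.mem_Icc.mpr ⟨hx1, hx2⟩
  set Sj : ℤ → Finset ℤ := fun j => Finset.Icc ((j-1)*L) ((j+2)*L - 1) with hSj
  set Ij : ℤ → Finset ℤ := fun j => Finset.Icc (j*L) ((j+1)*L - 1) with hIj
  have hIjSj : ∀ j, Ij j ⊆ Sj j := by
    intro j
    apply Finset.Icc_subset_Icc
    · have : (j-1)*L = j*L - L := by ring
      linarith
    · have : (j+2)*L = (j+1)*L + L := by ring
      linarith
  have hmemIj : ∀ x j : ℤ, x ∈ Ij j ↔ x / L = j := by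
    intro x j
    simp only [hIj, Finset.mem_Icc]
    constructor
    · rintro ⟨ha', hb'⟩
      have ha : j ≤ x / L := (Int.le_ediv_iff_mul_le hL0).mpr ha'
      have hb : x / L < j + 1 := by
        rw [Int.ediv_lt_iff_lt_mul hL0]
        omega
      omega
    · rintro rfl
      have h1' : (x / L) * L ≤ x := (Int.le_ediv_iff_mul_le hL0).mp le_rfl
      have h2' : x < (x / L + 1) * L := by
        rw [← Int.ediv_lt_iff_lt_mul hL0]
        omega
      have he : (x / L + 1) * L = (x / L) * L + L := by ring
      constructor <;> [exact h1'; linarith]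
  have hSjne : ∀ j, (Sj j).Nonempty := by
    intro j
    apply Finset.nonempty_Icc.mpr
    have : (j+2)*L = (j-1)*L + 3*L := by ring
    linarith
  have hSjcardpos : ∀ j, 0 < (Sj j).card := fun j => Finset.card_pos.mpr (hSjne j)
  have hSjcard : ∀ j, (((Sj j).card : ℕ) : ℝ) = 3 * (L:ℝ) := by
    intro j
    simp only [hSj]
    rw [Int.card_Icc]
    have h3 : ((j+2)*L - 1 + 1 - (j-1)*L) = 3*L := by ring
    rw [h3]
    have h4 : ((3*L).toNat : ℤ) = 3*L := Int.toNat_of_nonneg (by linarith)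
    exact_mod_cast congrArg (fun t : ℤ => (t : ℝ)) h4
  set E : Finset ℤ → Finset ℤ :=
    fun S => if h : S.Nonempty then Finset.Icc (S.min' h + L) (S.min' h + 2*L - 1) else ∅ with hE
  have hmin : ∀ j, ∀ h : (Sj j).Nonempty, (Sj j).min' h = (j-1)*L := by
    intro j h
    apply le_antisymm
    · apply Finset.min'_le
      simp only [hSj, Finset.mem_Icc]
      constructor
      · exact le_refl _
      · have : (j+2)*L = (j-1)*L + 3*L := by ring
        linarith
    · apply Finset.le_min'
      intro y hy
      simp only [hSj, Finset.mem_Icc] at hy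
      exact hy.1
  have hESj : ∀ j, E (Sj j) = Ij j := by
    intro j
    simp only [hE]
    rw [dif_pos (hSjne j), hmin j]
    simp only [hIj]
    congr 1 <;> ring
  have hIjcard : ∀ j, (((Ij j).card : ℕ) : ℝ) = (L:ℝ) := by
    intro j
    simp only [hIj]
    rw [Int.card_Icc]
    have h3 : ((j+1)*L - 1 + 1 - j*L) = L := by ring
    rw [h3]
    have h4 : (L.toNat : ℤ) = L := Int.toNat_of_nonneg (by linarith)
    exact_mod_cast congrArg (fun t : ℤ => (t : ℝ)) h4
  set Tg : Finset ℤ := hg.toFinset with hTg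
  set J : Finset ℤ := Tg.image (fun x => x / L) with hJ
  set 𝒮 : Finset (Finset ℤ) := J.image Sj with h𝒮
  refine ⟨𝒮, E, ⟨?_, ?_, ?_⟩, ?_⟩
  · intro S hS
    obtain ⟨j, hj, rfl⟩ := Finset.mem_image.mp hS
    refine ⟨(j-1)*L, (j+2)*L - 1, ?_, rfl⟩
    have : (j+2)*L = (j-1)*L + 3*L := by ring
    linarith
  · intro S hS
    obtain ⟨j, hj, rfl⟩ := Finset.mem_image.mp hS
    rw [hESj j]
    refine ⟨hIjSj j, ?_⟩
    rw [hSjcard j, hIjcard j]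
    linarith
  · intro x
    have hc : (𝒮.filter (fun S => x ∈ E S)).card ≤ 1 := by
      rw [Finset.card_le_one]
      intro a ha b hb
      simp only [Finset.mem_filter] at ha hb
      obtain ⟨ja, hja, rfl⟩ := Finset.mem_image.mp ha.1
      obtain ⟨jb, hjb, rfl⟩ := Finset.mem_image.mp hb.1
      have hxa : x ∈ Ij ja := by rw [← hESj ja]; exact ha.2
      have hxb : x ∈ Ij jb := by rw [← hESj jb]; exact hb.2
      have ea := (hmemIj x ja).mp hxa
      have eb := (hmemIj x jb).mp hxb
      have : ja = jb := by omega
      rw [this]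
    calc ((𝒮.filter (fun S => x ∈ E S)).card : ℝ) ≤ 1 := by exact_mod_cast hc
      _ ≤ ((1:ℝ)/4)⁻¹ := by norm_num
  -- the analytic estimate
  have hone_r : 1/r ≤ 1 := by rw [div_le_one hr0]; exact hr
  have hone_s : 1/s ≤ 1 := by rw [div_le_one hs0]; exact hs
  -- A is nonnegative
  set δ : ℤ → ℂ := fun x => if x = 0 then 1 else 0 with hδ
  have hδfin : (Function.support δ).Finite := by
    apply Set.Finite.subset (Set.finite_singleton 0)
    intro x hx
    simp only [Function.mem_support, hδ] at hx
    by_contra h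
    exact hx (if_neg h)
  have hδlp : lpNorm r δ = 1 := by
    rw [lpNorm_eq_finsum hr0 (T := {0}) ?_]
    · simp only [Finset.sum_singleton, hδ, if_pos rfl]
      norm_num [Real.one_rpow]
    · intro n hn
      simp only [Finset.mem_singleton] at hn
      simp [hδ, hn]
  have hA : 0 ≤ A := by
    have hconvδ : ∀ x, conv K δ x = K x := by
      intro x
      unfold conv
      rw [tsum_eq_single x ?_]
      · simp [hδ]
      · intro n hn
        have : x - n ≠ 0 := by omega
        simp [hδ, this]
    rcases eq_or_ne s 1 with hs1 | hs1
    · have h := h1 hs1 δ hδfin 0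
      rw [hδlp, mul_one] at h
      exact le_trans (norm_nonneg _) h
    · have h := h2 hs1 δ hδfin
      rw [hδlp, mul_one] at h
      refine le_trans ?_ h
      unfold lpNorm
      apply Real.rpow_nonneg
      apply tsum_nonneg
      intro i
      positivity
  -- vanishing of convolutions outside support sums
  have hconv_supp : ∀ (φ : ℤ → ℂ) (T : Finset ℤ), (∀ n ∉ T, φ n = 0) →
      ∀ x : ℤ, (∀ n ∈ Finset.Icc (-L) L, ∀ m ∈ T, x ≠ n + m) → conv K φ x = 0 := by
    intro φ T hT x hx
    unfold conv
    have hz : ∀ n : ℤ, K n * φ (x - n) = 0 := by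
      intro n
      by_cases hKn : K n = 0
      · simp [hKn]
      · have hn := hKS n hKn
        by_cases hφ : φ (x - n) = 0
        · simp [hφ]
        · exfalso
          have hm : x - n ∈ T := by
            by_contra hm
            exact hφ (hT _ hm)
          exact hx n hn (x - n) hm (by ring)
    calc (∑' n : ℤ, K n * φ (x - n)) = ∑' _ : ℤ, (0:ℂ) := tsum_congr hz
      _ = 0 := tsum_zero
  set cS : ℝ := 3 * (L:ℝ) with hcSdef
  have hcS0 : 0 < cS := by rw [hcSdef]; linarith
  have hkey : cS ^ ε ≤ 6 * N ^ ε := by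
    have hεle : ε ≤ 1 := by rw [hε]; linarith
    have hNε : 0 ≤ N ^ ε := Real.rpow_nonneg (le_of_lt hN0) _
    rcases le_or_gt 0 ε with h0 | h0
    · have hc6 : cS ≤ 6 * N := by rw [hcSdef]; linarith
      calc cS ^ ε ≤ (6*N) ^ ε := Real.rpow_le_rpow (le_of_lt hcS0) hc6 h0
        _ = 6 ^ ε * N ^ ε := Real.mul_rpow (by norm_num) (le_of_lt hN0)
        _ ≤ 6 * N ^ ε := by
            apply mul_le_mul_of_nonneg_right ?_ hNε
            calc (6:ℝ) ^ ε ≤ 6 ^ (1:ℝ) := Real.rpow_le_rpow_of_exponent_le (by norm_num) hεle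
              _ = 6 := Real.rpow_one 6
    · have hNc : N ≤ cS := by rw [hcSdef]; linarith
      have h := Real.rpow_le_rpow_of_nonpos hN0 hNc (le_of_lt h0)
      linarith
  -- the per-piece bound
  have hper : ∀ j ∈ J, ‖∑ x ∈ Tg.filter (fun x => x / L = j), conv K f x * (starRingEnd ℂ) (g x)‖
      ≤ 6 * N ^ ε * A * (avg r f (Sj j) * avg s g (Sj j) * ((Sj j).card : ℝ)) := by
    intro j _
    set fj : ℤ → ℂ := fun x => if x ∈ Sj j then f x else 0 with hfj
    have hfjT : ∀ n ∉ Sj j, fj n = 0 := fun n hn => if_neg hn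
    have hfjfin : (Function.support fj).Finite := by
      apply Set.Finite.subset (Sj j).finite_toSet
      intro x hx
      simp only [Function.mem_support] at hx
      by_contra h
      exact hx (hfjT x h)
    have hFeq : ∀ x ∈ Ij j, conv K f x = conv K fj x := by
      intro x hx
      simp only [hIj, Finset.mem_Icc] at hx
      unfold conv
      apply tsum_congr
      intro n
      by_cases hKn : K n = 0
      · simp [hKn]
      · have hn := hKS n hKn
        simp only [Finset.mem_Icc] at hn
        have hmem : x - n ∈ Sj j := by
          simp only [hSj, Finset.mem_Icc]
          have e1 : (j-1)*L = j*L - L := by ring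
          have e2 : (j+2)*L = (j+1)*L + L := by ring
          constructor <;> linarith [hx.1, hx.2, hn.1, hn.2]
        rw [hfj]
        simp only [if_pos hmem]
    have hconvfj_supp : ∀ x ∉ Finset.Icc (-L + (j-1)*L) (L + (j+2)*L), conv K fj x = 0 := by
      intro x hx
      apply hconv_supp fj (Sj j) hfjT x
      intro n hn m hm hxe
      apply hx
      simp only [Finset.mem_Icc] at hn ⊢
      simp only [hSj, Finset.mem_Icc] at hm
      subst hxe
      constructor <;> linarith [hn.1, hn.2, hm.1, hm.2]
    have hBound : ∑ x ∈ Ij j, ‖conv K fj x‖ * ‖g x‖ ≤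
        (A * lpNorm r fj) * (∑ x ∈ Sj j, ‖g x‖ ^ s) ^ (1/s) := by
      rcases eq_or_ne s 1 with hs1 | hs1
      · subst hs1
        have hpt := h1 rfl fj hfjfin
        have hM0 : 0 ≤ A * lpNorm r fj := le_trans (norm_nonneg _) (hpt 0)
        calc ∑ x ∈ Ij j, ‖conv K fj x‖ * ‖g x‖
            ≤ ∑ x ∈ Ij j, (A * lpNorm r fj) * ‖g x‖ :=
              Finset.sum_le_sum (fun x _ => mul_le_mul_of_nonneg_right (hpt x) (norm_nonneg _))
          _ = (A * lpNorm r fj) * ∑ x ∈ Ij j, ‖g x‖ := by rw [Finset.mul_sum]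
          _ ≤ (A * lpNorm r fj) * ∑ x ∈ Sj j, ‖g x‖ := by
              apply mul_le_mul_of_nonneg_left ?_ hM0
              exact Finset.sum_le_sum_of_subset_of_nonneg (hIjSj j)
                (fun _ _ _ => norm_nonneg _)
          _ = (A * lpNorm r fj) * (∑ x ∈ Sj j, ‖g x‖ ^ (1:ℝ)) ^ (1/(1:ℝ)) := by
              norm_num [Real.rpow_one]
      · have hs1' : 1 < s := lt_of_le_of_ne hs (Ne.symm hs1)
        have hconj : (s / (s-1)).HolderConjugate s :=
          (Real.HolderConjugate.conjExponent hs1').symm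
        have hs'0 : 0 < s / (s-1) := hconj.pos
        have hhold := Real.inner_le_Lp_mul_Lq (Ij j)
          (fun x => ‖conv K fj x‖) (fun x => ‖g x‖) hconj
        simp only [abs_norm] at hhold
        have hlp := h2 hs1 fj hfjfin
        have hterm1 : (∑ x ∈ Ij j, ‖conv K fj x‖ ^ (s/(s-1))) ^ (1/(s/(s-1)))
            ≤ A * lpNorm r fj :=
          le_trans (sum_rpow_le_lpNorm_rpow hs'0 hconvfj_supp (Ij j)) hlp
        have hterm2 : (∑ x ∈ Ij j, ‖g x‖ ^ s) ^ (1/s) ≤ (∑ x ∈ Sj j, ‖g x‖ ^ s) ^ (1/s) := by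
          apply Real.rpow_le_rpow (by positivity) ?_ (by positivity)
          exact Finset.sum_le_sum_of_subset_of_nonneg (hIjSj j) (fun i _ _ => by positivity)
        refine le_trans hhold ?_
        apply mul_le_mul hterm1 hterm2 (by positivity) ?_
        exact le_trans (by positivity) hterm1
    have hlpfj : lpNorm r fj = avg r f (Sj j) * cS ^ (1/r) := by
      rw [lpNorm_eq_finsum hr0 hfjT]
      rw [show (∑ x ∈ Sj j, ‖fj x‖ ^ r) = ∑ x ∈ Sj j, ‖f x‖ ^ r from
        Finset.sum_congr rfl (fun x hx => by rw [hfj]; simp only [if_pos hx])]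
      rw [sum_rpow_eq_avg_mul f (Sj j) (hSjcardpos j), hSjcard j]
    have hgsum : (∑ x ∈ Sj j, ‖g x‖ ^ s) ^ (1/s) = avg s g (Sj j) * cS ^ (1/s) := by
      rw [sum_rpow_eq_avg_mul g (Sj j) (hSjcardpos j), hSjcard j]
    have hsj_sub : Tg.filter (fun x => x / L = j) ⊆ Ij j := by
      intro x hx
      rw [hmemIj]
      exact (Finset.mem_filter.mp hx).2
    have havgf : 0 ≤ avg r f (Sj j) := by unfold avg; positivity
    have havgg : 0 ≤ avg s g (Sj j) := by unfold avg; positivity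
    have hP : 0 ≤ A * avg r f (Sj j) * avg s g (Sj j) :=
      mul_nonneg (mul_nonneg hA havgf) havgg
    have hpow : cS ^ (1/r) * cS ^ (1/s) = cS ^ ε * cS := by
      calc cS ^ (1/r) * cS ^ (1/s) = cS ^ (1/r + 1/s) := (Real.rpow_add hcS0 _ _).symm
        _ = cS ^ (ε + 1) := by rw [hε]; ring_nf
        _ = cS ^ ε * cS ^ (1:ℝ) := Real.rpow_add hcS0 _ _
        _ = cS ^ ε * cS := by rw [Real.rpow_one]
    calc ‖∑ x ∈ Tg.filter (fun x => x / L = j), conv K f x * (starRingEnd ℂ) (g x)‖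
        ≤ ∑ x ∈ Tg.filter (fun x => x / L = j), ‖conv K f x * (starRingEnd ℂ) (g x)‖ :=
          norm_sum_le _ _
      _ = ∑ x ∈ Tg.filter (fun x => x / L = j), ‖conv K fj x‖ * ‖g x‖ := by
          apply Finset.sum_congr rfl
          intro x hx
          rw [norm_mul, hFeq x (hsj_sub hx), RCLike.norm_conj]
      _ ≤ ∑ x ∈ Ij j, ‖conv K fj x‖ * ‖g x‖ :=
          Finset.sum_le_sum_of_subset_of_nonneg hsj_sub (fun _ _ _ => by positivity)
      _ ≤ (A * lpNorm r fj) * (∑ x ∈ Sj j, ‖g x‖ ^ s) ^ (1/s) := hBound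
      _ = (A * avg r f (Sj j) * avg s g (Sj j)) * (cS ^ ε * cS) := by
          rw [hlpfj, hgsum, ← hpow]; ring
      _ ≤ (A * avg r f (Sj j) * avg s g (Sj j)) * ((6 * N ^ ε) * cS) := by
          apply mul_le_mul_of_nonneg_left ?_ hP
          exact mul_le_mul_of_nonneg_right hkey (le_of_lt hcS0)
      _ = 6 * N ^ ε * A * (avg r f (Sj j) * avg s g (Sj j) * ((Sj j).card : ℝ)) := by
          rw [hSjcard j]; ring
  -- assemble
  have hpair : pairing (conv K f) g =
      ∑ j ∈ J, ∑ x ∈ Tg.filter (fun x => x / L = j), conv K f x * (starRingEnd ℂ) (g x) := by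
    unfold pairing
    rw [tsum_eq_sum (s := Tg) ?_]
    · exact (Finset.sum_fiberwise_of_maps_to
        (fun x hx => Finset.mem_image_of_mem _ hx) _).symm
    · intro b hb
      have : g b = 0 := by
        rw [hTg, Set.Finite.mem_toFinset, Function.mem_support, not_not] at hb
        exact hb
      simp [this]
  have hinj : ∀ a ∈ J, ∀ b ∈ J, Sj a = Sj b → a = b := by
    intro a _ b _ hab
    have hma : (a-1)*L ∈ Sj a := by
      simp only [hSj, Finset.mem_Icc]
      have : (a+2)*L = (a-1)*L + 3*L := by ring
      constructor <;> linarith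
    have hmb : (b-1)*L ∈ Sj b := by
      simp only [hSj, Finset.mem_Icc]
      have : (b+2)*L = (b-1)*L + 3*L := by ring
      constructor <;> linarith
    rw [hab] at hma
    rw [← hab] at hmb
    simp only [hSj, Finset.mem_Icc] at hma hmb
    have heq : (a-1)*L = (b-1)*L := by
      have e1 : (a+2)*L = (a-1)*L + 3*L := by ring
      have e2 : (b+2)*L = (b-1)*L + 3*L := by ring
      nlinarith [hma.1, hma.2, hmb.1, hmb.2]
    have : a - 1 = b - 1 := mul_right_cancel₀ (by omega) heq
    omega
  rw [hpair]
  calc ‖∑ j ∈ J, ∑ x ∈ Tg.filter (fun x => x / L = j), conv K f x * (starRingEnd ℂ) (g x)‖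
      ≤ ∑ j ∈ J, ‖∑ x ∈ Tg.filter (fun x => x / L = j), conv K f x * (starRingEnd ℂ) (g x)‖ :=
        norm_sum_le _ _
    _ ≤ ∑ j ∈ J, 6 * N ^ ε * A * (avg r f (Sj j) * avg s g (Sj j) * ((Sj j).card : ℝ)) :=
        Finset.sum_le_sum hper
    _ = 6 * N ^ ε * A * sparseForm r s 𝒮 f g := by
        unfold sparseForm
        rw [h𝒮, Finset.sum_image hinj, ← Finset.mul_sum]
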